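/- Let U ⊆ ℝⁿ (n ≥ 2) be open and let u : U → ℝ be of class C⁶ with Δ²u = 1 on U. Set v := −Δu and q := v²/4 − ((n+2)/(2n)) u. Then on U: (i) Δq = |∇v|²/2 + v/n, and (ii) Δ²q = |D²v|² − 1/n = |D²v|² − (Δv)²/n, where |D²v|² denotes the squared Frobenius norm of the Hessian of v (the sum of the squares of all second partial derivatives). -/

import Mathlib

open MeasureTheory Metric Set
open scoped RealInnerProductSpace ENNReal

noncomputable section

/-- `ℝⁿ` as a Euclidean space. -/
abbrev Euc (n : ℕ) := EuclideanSpace ℝ (Fin n)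

/-- Second partial derivative `∂_i ∂_j f` at `x`. -/
noncomputable def pd2 {n : ℕ} (f : Euc n → ℝ) (x : Euc n) (i j : Fin n) : ℝ :=
  fderiv ℝ (fun y => fderiv ℝ f y (EuclideanSpace.single j (1 : ℝ))) x
    (EuclideanSpace.single i (1 : ℝ))

/-- The Laplacian `Δf = ∑ᵢ ∂ᵢᵢ f`. -/
noncomputable def lap {n : ℕ} (f : Euc n → ℝ) (x : Euc n) : ℝ :=
  ∑ i, pd2 f x i i

/-- The squared Frobenius norm `|D²f|²` of the Hessian of `f` at `x`. -/
noncomputable def hess2 {n : ℕ} (f : Euc n → ℝ) (x : Euc n) : ℝ :=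
  ∑ i, ∑ j, (pd2 f x i j) ^ 2

/-- The `α`-Hölder seminorm of `f` on `s`. -/
noncomputable def holderSemi {n : ℕ} {F : Type*} [NormedAddCommGroup F]
    (α : ℝ) (s : Set (Euc n)) (f : Euc n → F) : ℝ :=
  sSup ((fun p : Euc n × Euc n => ‖f p.1 - f p.2‖ / ‖p.1 - p.2‖ ^ α) ''
    {p | p.1 ∈ s ∧ p.2 ∈ s ∧ p.1 ≠ p.2})

/-- The `C^{4+α}`-norm of `f` on `s`: the sum over `k = 0,…,4` of the sup-norms of
the `k`-th derivatives plus the `α`-Hölder seminorm of the 4th derivative. -/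
noncomputable def c4Norm {n : ℕ} {F : Type*} [NormedAddCommGroup F] [NormedSpace ℝ F]
    (α : ℝ) (s : Set (Euc n)) (f : Euc n → F) : ℝ :=
  (∑ k ∈ Finset.range 5, sSup ((fun x => ‖iteratedFDeriv ℝ k f x‖) '' s)) +
    holderSemi α s (iteratedFDeriv ℝ 4 f)

/-- `f ∈ C^{4+α}(Ω̄)`: `f` is `C⁴` on an open neighborhood of `closure Ω` and its
fourth derivative is `α`-Hölder continuous on `closure Ω`. -/
def MemC4Holder {n : ℕ} {F : Type*} [NormedAddCommGroup F] [NormedSpace ℝ F]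
    (α : ℝ) (Ω : Set (Euc n)) (f : Euc n → F) : Prop :=
  (∃ U, IsOpen U ∧ closure Ω ⊆ U ∧ ContDiffOn ℝ 4 f U) ∧
  ∃ M : ℝ, ∀ x ∈ closure Ω, ∀ y ∈ closure Ω,
    ‖iteratedFDeriv ℝ 4 f x - iteratedFDeriv ℝ 4 f y‖ ≤ M * ‖x - y‖ ^ α

/-- `Ω` is `ε₀`-close to the unit ball `𝔹` in the `C^{4+α}`-sense: there is a
`C^{4+α}` diffeomorphism `Φ : 𝔹̄ → Ω̄` (with `C^{4+α}` inverse `Ψ`) mapping `𝔹`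
onto `Ω`, with `‖Φ − Id‖_{C^{4+α}(𝔹̄)} < ε₀`. -/
def CloseToBall {n : ℕ} (α ε₀ : ℝ) (Ω : Set (Euc n)) : Prop :=
  ∃ Φ Ψ : Euc n → Euc n,
    MemC4Holder α (ball (0 : Euc n) 1) Φ ∧
    MemC4Holder α Ω Ψ ∧
    Φ '' ball (0 : Euc n) 1 = Ω ∧
    Φ '' closure (ball (0 : Euc n) 1) = closure Ω ∧
    (∀ x ∈ closure (ball (0 : Euc n) 1), Ψ (Φ x) = x) ∧
    (∀ y ∈ closure Ω, Φ (Ψ y) = y) ∧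
    c4Norm α (closure (ball (0 : Euc n) 1)) (fun x => Φ x - x) < ε₀

/-- `u` is a `C^{4+α}(Ω̄)` solution of the fourth order Dirichlet problem:
`Δ²u = 1` in `Ω`, `u = 0` and `∇u = 0` on `∂Ω`. -/
def IsSol4 {n : ℕ} (α : ℝ) (Ω : Set (Euc n)) (u : Euc n → ℝ) : Prop :=
  MemC4Holder α Ω u ∧
  (∀ x ∈ Ω, lap (lap u) x = 1) ∧
  ∀ x ∈ frontier Ω, u x = 0 ∧ gradient u x = 0

/-- The surface measure on `∂Ω`: the `(n−1)`-dimensional Hausdorff measure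
restricted to `∂Ω`. -/
noncomputable def bmeas {n : ℕ} (Ω : Set (Euc n)) : Measure (Euc n) :=
  (μH[(n : ℝ) - 1]).restrict (frontier Ω)

namespace Stmt7Aux

variable {n : ℕ}

/-- First partial derivative `∂ᵢ f` at `x`. -/
noncomputable def pd (f : Euc n → ℝ) (x : Euc n) (i : Fin n) : ℝ :=
  fderiv ℝ f x (EuclideanSpace.single i (1 : ℝ))

lemma pd2_eq (f : Euc n → ℝ) (x : Euc n) (i j : Fin n) :
    pd2 f x i j = pd (fun y => pd f y j) x i := rfl

variable {U : Set (Euc n)} {f g : Euc n → ℝ} {x : Euc n}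

lemma pd_congr (h : f =ᶠ[nhds x] g) (i : Fin n) : pd f x i = pd g x i := by
  unfold pd; rw [h.fderiv_eq]

lemma pd_congrU (hU : IsOpen U) (h : ∀ y ∈ U, f y = g y) (hx : x ∈ U) (i : Fin n) :
    pd f x i = pd g x i :=
  pd_congr (Filter.eventuallyEq_of_mem (hU.mem_nhds hx) h) i

lemma pd_const (c : ℝ) (i : Fin n) : pd (fun _ : Euc n => c) x i = 0 := by simp [pd]

lemma pd_add (hf : DifferentiableAt ℝ f x) (hg : DifferentiableAt ℝ g x) (i : Fin n) :
    pd (fun y => f y + g y) x i = pd f x i + pd g x i := by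
  simp [pd, fderiv_fun_add hf hg]

lemma pd_neg (i : Fin n) : pd (fun y => -f y) x i = -pd f x i := by
  simp [pd, fderiv_neg]

lemma pd_sub (hf : DifferentiableAt ℝ f x) (hg : DifferentiableAt ℝ g x) (i : Fin n) :
    pd (fun y => f y - g y) x i = pd f x i - pd g x i := by
  simp [pd, fderiv_fun_sub hf hg]

lemma pd_const_mul (hf : DifferentiableAt ℝ f x) (c : ℝ) (i : Fin n) :
    pd (fun y => c * f y) x i = c * pd f x i := by
  simp [pd, fderiv_const_mul hf c]

lemma pd_mul (hf : DifferentiableAt ℝ f x) (hg : DifferentiableAt ℝ g x) (i : Fin n) :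
    pd (fun y => f y * g y) x i = f x * pd g x i + g x * pd f x i := by
  simp [pd, fderiv_fun_mul hf hg]

lemma pd_sum {ι : Type*} (s : Finset ι) (F : ι → Euc n → ℝ)
    (h : ∀ k ∈ s, DifferentiableAt ℝ (F k) x) (i : Fin n) :
    pd (fun y => ∑ k ∈ s, F k y) x i = ∑ k ∈ s, pd (F k) x i := by
  unfold pd; rw [fderiv_fun_sum h]; simp

lemma diffAt {m : ℕ} (hm : 1 ≤ m) (hU : IsOpen U) (hf : ContDiffOn ℝ m f U) (hx : x ∈ U) :
    DifferentiableAt ℝ f x :=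
  (hf.contDiffAt (hU.mem_nhds hx)).differentiableAt (by exact_mod_cast Nat.one_le_iff_ne_zero.mp hm)

lemma contDiffOn_pd {m m' : ℕ} (hU : IsOpen U) (hf : ContDiffOn ℝ m' f U) (h : m + 1 ≤ m')
    (j : Fin n) : ContDiffOn ℝ m (fun y => pd f y j) U :=
  (hf.fderiv_of_isOpen hU (by exact_mod_cast h)).clm_apply contDiffOn_const

lemma cle {a b : ℕ} (h : a ≤ b) : ((a : ℕ) : WithTop ℕ∞) ≤ ((b : ℕ) : WithTop ℕ∞) := by
  exact_mod_cast h

lemma pd2_symm (hf : ContDiffAt ℝ 2 f x) (i j : Fin n) : pd2 f x i j = pd2 f x j i := by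
  have hd : DifferentiableAt ℝ (fderiv ℝ f) x :=
    (hf.fderiv_right (m := 1) (by norm_num)).differentiableAt (by norm_num)
  have key : ∀ a b : Fin n, pd2 f x a b =
      fderiv ℝ (fderiv ℝ f) x (EuclideanSpace.single a 1) (EuclideanSpace.single b 1) := by
    intro a b
    have h2 := fderiv_clm_apply (𝕜 := ℝ) (c := fun y => fderiv ℝ f y)
      (u := fun _ => EuclideanSpace.single b (1 : ℝ)) hd (differentiableAt_const _)
    rw [pd2]
    simp only [h2]
    simp
  rw [key i j, key j i, hf.isSymmSndFDerivAt (by simp)]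

lemma norm_gradient_sq (v : Euc n → ℝ) (x : Euc n) :
    ‖gradient v x‖ ^ 2 = ∑ i, (pd v x i) ^ 2 := by
  have h : ∀ i, gradient v x i = pd v x i := by
    intro i
    have h1 : ⟪gradient v x, EuclideanSpace.single i (1 : ℝ)⟫ =
        fderiv ℝ v x (EuclideanSpace.single i 1) := InnerProductSpace.toDual_symm_apply
    rw [EuclideanSpace.inner_single_right] at h1
    simpa [pd] using h1
  rw [show ((‖gradient v x‖ : ℝ) ^ 2) = ∑ i, ‖gradient v x i‖ ^ 2 from
    PiLp.norm_sq_eq_of_L2 _ _]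
  exact Finset.sum_congr rfl fun i _ => by rw [h i, Real.norm_eq_abs, sq_abs]

lemma lap_congrU (hU : IsOpen U) (h : ∀ y ∈ U, f y = g y) (hx : x ∈ U) :
    lap f x = lap g x := by
  unfold lap
  refine Finset.sum_congr rfl fun i _ => ?_
  rw [pd2_eq, pd2_eq]
  exact pd_congrU hU (fun y hy => pd_congrU hU h hy i) hx i

lemma lap_neg : lap (fun y => -f y) x = -lap f x := by
  simp only [lap, pd2_eq, pd_neg, ← Finset.sum_neg_distrib]

lemma lap_const_mul (hU : IsOpen U) (hf : ContDiffOn ℝ 2 f U) (hx : x ∈ U) (c : ℝ) :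
    lap (fun y => c * f y) x = c * lap f x := by
  unfold lap
  rw [Finset.mul_sum]
  refine Finset.sum_congr rfl fun i _ => ?_
  rw [pd2_eq, pd2_eq]
  have h1 : ∀ y ∈ U, pd (fun z => c * f z) y i = c * pd f y i := fun y hy =>
    pd_const_mul (diffAt (by norm_num) hU hf hy) c i
  rw [pd_congrU hU h1 hx i,
    pd_const_mul (diffAt (le_refl 1) hU (contDiffOn_pd hU hf (by norm_num) i) hx) c i]

lemma lap_add (hU : IsOpen U) (hf : ContDiffOn ℝ 2 f U) (hg : ContDiffOn ℝ 2 g U) (hx : x ∈ U) :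
    lap (fun y => f y + g y) x = lap f x + lap g x := by
  unfold lap
  rw [← Finset.sum_add_distrib]
  refine Finset.sum_congr rfl fun i _ => ?_
  rw [pd2_eq, pd2_eq, pd2_eq]
  have h1 : ∀ y ∈ U, pd (fun z => f z + g z) y i = pd f y i + pd g y i := fun y hy =>
    pd_add (diffAt (by norm_num) hU hf hy) (diffAt (by norm_num) hU hg hy) i
  rw [pd_congrU hU h1 hx i,
    pd_add (diffAt (le_refl 1) hU (contDiffOn_pd hU hf (by norm_num) i) hx)
      (diffAt (le_refl 1) hU (contDiffOn_pd hU hg (by norm_num) i) hx) i]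

lemma lap_sub (hU : IsOpen U) (hf : ContDiffOn ℝ 2 f U) (hg : ContDiffOn ℝ 2 g U) (hx : x ∈ U) :
    lap (fun y => f y - g y) x = lap f x - lap g x := by
  unfold lap
  rw [← Finset.sum_sub_distrib]
  refine Finset.sum_congr rfl fun i _ => ?_
  rw [pd2_eq, pd2_eq, pd2_eq]
  have h1 : ∀ y ∈ U, pd (fun z => f z - g z) y i = pd f y i - pd g y i := fun y hy =>
    pd_sub (diffAt (by norm_num) hU hf hy) (diffAt (by norm_num) hU hg hy) i
  rw [pd_congrU hU h1 hx i,
    pd_sub (diffAt (le_refl 1) hU (contDiffOn_pd hU hf (by norm_num) i) hx)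
      (diffAt (le_refl 1) hU (contDiffOn_pd hU hg (by norm_num) i) hx) i]

lemma lap_mul (hU : IsOpen U) (hf : ContDiffOn ℝ 2 f U) (hg : ContDiffOn ℝ 2 g U) (hx : x ∈ U) :
    lap (fun y => f y * g y) x =
      f x * lap g x + 2 * ∑ i, pd f x i * pd g x i + g x * lap f x := by
  have key : ∀ i : Fin n, pd2 (fun y => f y * g y) x i i =
      f x * pd2 g x i i + 2 * (pd f x i * pd g x i) + g x * pd2 f x i i := by
    intro i
    rw [pd2_eq]
    have h1 : ∀ y ∈ U, pd (fun z => f z * g z) y i = f y * pd g y i + g y * pd f y i :=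
      fun y hy => pd_mul (diffAt (by norm_num) hU hf hy) (diffAt (by norm_num) hU hg hy) i
    rw [pd_congrU hU h1 hx i]
    have dfx : DifferentiableAt ℝ f x := diffAt (by norm_num) hU hf hx
    have dgx : DifferentiableAt ℝ g x := diffAt (by norm_num) hU hg hx
    have dpf : DifferentiableAt ℝ (fun y => pd f y i) x :=
      diffAt (le_refl 1) hU (contDiffOn_pd hU hf (by norm_num) i) hx
    have dpg : DifferentiableAt ℝ (fun y => pd g y i) x :=
      diffAt (le_refl 1) hU (contDiffOn_pd hU hg (by norm_num) i) hx
    rw [pd_add (f := fun y => f y * pd g y i) (g := fun y => g y * pd f y i) (dfx.mul dpg) (dgx.mul dpf) i, pd_mul dfx dpg i, pd_mul dgx dpf i]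
    rw [pd2_eq, pd2_eq]
    ring
  calc lap (fun y => f y * g y) x
      = ∑ i, (f x * pd2 g x i i + 2 * (pd f x i * pd g x i) + g x * pd2 f x i i) :=
        Finset.sum_congr rfl fun i _ => key i
    _ = _ := by
        rw [Finset.sum_add_distrib, Finset.sum_add_distrib, ← Finset.mul_sum, ← Finset.mul_sum,
          ← Finset.mul_sum, lap, lap]

lemma lap_sum {ι : Type*} (s : Finset ι) (F : ι → Euc n → ℝ) (hU : IsOpen U)
    (hF : ∀ k ∈ s, ContDiffOn ℝ 2 (F k) U) (hx : x ∈ U) :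
    lap (fun y => ∑ k ∈ s, F k y) x = ∑ k ∈ s, lap (F k) x := by
  unfold lap
  rw [Finset.sum_comm]
  refine Finset.sum_congr rfl fun i _ => ?_
  rw [pd2_eq]
  have h1 : ∀ y ∈ U, pd (fun z => ∑ k ∈ s, F k z) y i = ∑ k ∈ s, pd (F k) y i :=
    fun y hy => pd_sum s F (fun k hk => diffAt (by norm_num) hU (hF k hk) hy) i
  rw [pd_congrU hU h1 hx i,
    pd_sum s _ (fun k hk =>
      diffAt (le_refl 1) hU (contDiffOn_pd hU (hF k hk) (by norm_num) i) hx) i]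
  exact Finset.sum_congr rfl fun k _ => rfl

lemma lap_pd (hU : IsOpen U) (hf : ContDiffOn ℝ (3 : ℕ) f U) (hx : x ∈ U) (k : Fin n) :
    lap (fun y => pd f y k) x = pd (fun y => lap f y) x k := by
  have hpdi : ∀ i : Fin n, ContDiffOn ℝ (2 : ℕ) (fun y => pd f y i) U :=
    fun i => contDiffOn_pd hU hf (by norm_num) i
  have hRHS : pd (fun y => lap f y) x k
      = ∑ i, pd (fun y => pd (fun z => pd f z i) y i) x k := by
    have h0 : (fun y => lap f y) = fun y => ∑ i, pd (fun z => pd f z i) y i := rfl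
    rw [h0, pd_sum _ _ (fun i _ => diffAt (le_refl 1) hU
      (contDiffOn_pd hU (hpdi i) (by norm_num) i) hx) k]
  rw [hRHS]
  refine Finset.sum_congr rfl fun i _ => ?_
  show pd (fun y => pd (fun z => pd f z k) y i) x i
      = pd (fun y => pd (fun z => pd f z i) y i) x k
  have s1 : pd (fun y => pd (fun z => pd f z i) y i) x k
      = pd (fun y => pd (fun z => pd f z i) y k) x i := by
    rw [← pd2_eq, ← pd2_eq]
    exact pd2_symm (((hpdi i).contDiffAt (hU.mem_nhds hx)).of_le (by norm_cast)) k i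
  rw [s1]
  refine pd_congrU hU (fun y hy => ?_) hx i
  rw [← pd2_eq, ← pd2_eq]
  exact pd2_symm ((hf.contDiffAt (hU.mem_nhds hy)).of_le (by norm_cast)) i k

end Stmt7Aux


open Stmt7Aux in
/-- for `u` of class `C⁶` on an open set `U ⊆ ℝⁿ` with `Δ²u = 1`
on `U`, setting `v := −Δu` and `q := v²/4 − ((n+2)/(2n))u`, one has on `U`:
(i) `Δq = |∇v|²/2 + v/n`, and (ii) `Δ²q = |D²v|² − 1/n = |D²v|² − (Δv)²/n`. -/
theorem stmt7 {n : ℕ} (hn : 2 ≤ n) (U : Set (Euc n)) (hU : IsOpen U)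
    (u : Euc n → ℝ) (hu : ContDiffOn ℝ 6 u U)
    (hbih : ∀ x ∈ U, lap (lap u) x = 1)
    (v q : Euc n → ℝ) (hv : ∀ x, v x = -lap u x)
    (hq : ∀ x, q x = (v x) ^ 2 / 4 - (((n : ℝ) + 2) / (2 * n)) * u x) :
    (∀ x ∈ U, lap q x = ‖gradient v x‖ ^ 2 / 2 + v x / n) ∧
    (∀ x ∈ U, lap (lap q) x = hess2 v x - 1 / n ∧
      hess2 v x - 1 / (n : ℝ) = hess2 v x - (lap v x) ^ 2 / n) := by
  have hn0 : (n : ℝ) ≠ 0 := Nat.cast_ne_zero.mpr (by omega)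
  have hu6 : ContDiffOn ℝ ((6 : ℕ) : WithTop ℕ∞) u U := hu.of_le (by norm_num)
  have hL4 : ContDiffOn ℝ ((4 : ℕ) : WithTop ℕ∞) (lap u) U := by
    have h0 : lap u = fun y => ∑ i, pd (fun z => pd u z i) y i := rfl
    rw [h0]
    exact ContDiffOn.sum fun i _ =>
      contDiffOn_pd hU (contDiffOn_pd (m := 5) hU hu6 (by norm_num) i) (by norm_num) i
  have hL3 : ContDiffOn ℝ ((3 : ℕ) : WithTop ℕ∞) (lap u) U := hL4.of_le (cle (by norm_num))
  have hL2 : ContDiffOn ℝ 2 (lap u) U := hL4.of_le (by exact_mod_cast cle (show 2 ≤ 4 by norm_num))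
  have hu2 : ContDiffOn ℝ 2 u U := hu6.of_le (by exact_mod_cast cle (show 2 ≤ 6 by norm_num))
  have hveq : v = fun z => -lap u z := funext hv
  have hq' : q = fun z => (1/4 : ℝ) * (lap u z * lap u z) - (((n : ℝ) + 2) / (2 * n)) * u z :=
    funext fun z => by rw [hq z, hv z]; ring
  have hLL : ContDiffOn ℝ 2 (fun z => lap u z * lap u z) U := hL2.mul hL2
  have hf1 : ContDiffOn ℝ 2 (fun z => (1/4 : ℝ) * (lap u z * lap u z)) U :=
    contDiffOn_const.mul hLL
  have hf2 : ContDiffOn ℝ 2 (fun z => (((n : ℝ) + 2) / (2 * n)) * u z) U :=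
    contDiffOn_const.mul hu2
  have key : ∀ x ∈ U, lap q x = (∑ i, pd (lap u) x i ^ 2) / 2 - lap u x / n := by
    intro x hx
    rw [hq', lap_sub hU hf1 hf2 hx, lap_const_mul hU hLL hx, lap_const_mul hU hu2 hx,
      lap_mul hU hL2 hL2 hx, hbih x hx]
    have h2 : ∑ i, pd (lap u) x i * pd (lap u) x i = ∑ i, pd (lap u) x i ^ 2 :=
      Finset.sum_congr rfl fun i _ => (sq _).symm
    rw [h2]
    field_simp
    ring
  refine ⟨?_, ?_⟩
  · intro x hx
    rw [key x hx, hv x]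
    have hg : ‖gradient v x‖ ^ 2 = ∑ i, pd (lap u) x i ^ 2 := by
      rw [norm_gradient_sq]
      refine Finset.sum_congr rfl fun i _ => ?_
      have hpv : pd v x i = -pd (lap u) x i := by
        rw [hveq]; exact pd_neg i
      rw [hpv]; ring
    rw [hg]; ring
  · intro x hx
    have hlapv : lap v x = -1 := by
      rw [hveq, lap_neg, hbih x hx]
    have hhess : hess2 v x = ∑ j, ∑ i, pd2 (lap u) x i j ^ 2 := by
      unfold hess2
      rw [Finset.sum_comm]
      refine Finset.sum_congr rfl fun j _ => Finset.sum_congr rfl fun i _ => ?_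
      have h1 : pd2 v x i j = -pd2 (lap u) x i j := by
        rw [hveq, pd2_eq, pd2_eq]
        have h2 : (fun y => pd (fun z => -lap u z) y j) = fun y => -pd (lap u) y j :=
          funext fun y => pd_neg j
        rw [h2, pd_neg]
      rw [h1]; ring
    have hPk3 : ∀ k : Fin n, ContDiffOn ℝ (3 : ℕ) (fun y => pd (lap u) y k) U :=
      fun k => contDiffOn_pd hU hL4 (by norm_num) k
    have hPk2 : ∀ k : Fin n, ContDiffOn ℝ 2 (fun y => pd (lap u) y k) U :=
      fun k => (hPk3 k).of_le (by exact_mod_cast cle (show 2 ≤ 3 by norm_num))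
    have hS : ContDiffOn ℝ 2 (fun y => ∑ k, pd (lap u) y k * pd (lap u) y k) U :=
      ContDiffOn.sum fun k _ => (hPk2 k).mul (hPk2 k)
    have hcong : lap (lap q) x = lap (fun y =>
        (1/2 : ℝ) * (∑ k, pd (lap u) y k * pd (lap u) y k) + (-(1/(n : ℝ))) * lap u y) x := by
      refine lap_congrU hU (fun y hy => ?_) hx
      rw [key y hy]
      have h2 : ∑ i, pd (lap u) y i ^ 2 = ∑ i, pd (lap u) y i * pd (lap u) y i :=
        Finset.sum_congr rfl fun i _ => sq _
      rw [h2]; ring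
    have hlapPk : ∀ k : Fin n, lap (fun y => pd (lap u) y k) x = 0 := by
      intro k
      rw [lap_pd hU hL3 hx k]
      have h3 : pd (fun y => lap (lap u) y) x k = pd (fun _ : Euc n => (1 : ℝ)) x k :=
        pd_congrU hU (fun y hy => hbih y hy) hx k
      rw [h3, pd_const]
    refine ⟨?_, by rw [hlapv]; norm_num⟩
    rw [hcong, lap_add hU (contDiffOn_const.mul hS) (contDiffOn_const.mul hL2) hx,
      lap_const_mul hU hS hx, lap_const_mul hU hL2 hx, hbih x hx,
      lap_sum Finset.univ _ hU (fun k _ => (hPk2 k).mul (hPk2 k)) hx]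
    have h4 : ∀ k : Fin n, lap (fun y => pd (lap u) y k * pd (lap u) y k) x
        = 2 * ∑ i, pd2 (lap u) x i k ^ 2 := by
      intro k
      rw [lap_mul hU (hPk2 k) (hPk2 k) hx, hlapPk k]
      have h5 : ∑ i, pd (fun y => pd (lap u) y k) x i * pd (fun y => pd (lap u) y k) x i
          = ∑ i, pd2 (lap u) x i k ^ 2 :=
        Finset.sum_congr rfl fun i _ => by rw [← pd2_eq]; ring
      rw [h5]; ring
    rw [Finset.sum_congr rfl fun k _ => h4 k, hhess, ← Finset.mul_sum]
    ring

end
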